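/- Let $n \geq 3$, $p > \frac{2n}{n+2}$, and $a = \frac{n-1}{n+1}$. Define the sequence $b_0 = -1$, $b_{m+1} = \min\{\, n - 1 - k(b_m, p),\ a \,\}$, where $k(b,p) = \frac{n-1+a}{2} - 1 + \frac{n-1-b}{2}\big(2 - \frac{2}{p}\big) + \frac{n}{2}\big(\frac{2}{p} - 1\big)$. Then as long as $b_m \leq \frac{2n - (n+2)p}{(n+1)(p-1)} + a$, one has $b_{m+1} - b_m \geq \mu(p)$ where $\mu(p) = \frac{n+3}{2(n+1)} - \frac1p + \frac12 - \frac{2n-(n+2)p}{(n+1)(p-1)p} - \frac{n-1}{(n+1)p} > 0$, and consequently there exists $N \in \mathbb{N}$ such that $b_m = a$ for all $m \geq N$. -/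

import Mathlib

set_option maxHeartbeats 1000000


theorem stmt_19 (n : ℕ) (hn : 3 ≤ n) (p : ℝ) (hp : 2 * (n : ℝ) / ((n : ℝ) + 2) < p)
    (a : ℝ) (ha : a = ((n : ℝ) - 1) / ((n : ℝ) + 1))
    (k : ℝ → ℝ)
    (hk : ∀ b : ℝ, k b = ((n : ℝ) - 1 + a) / 2 - 1
      + (((n : ℝ) - 1 - b) / 2) * (2 - 2 / p) + ((n : ℝ) / 2) * (2 / p - 1))
    (μ : ℝ)
    (hμ : μ = ((n : ℝ) + 3) / (2 * ((n : ℝ) + 1)) - 1 / p + 1 / 2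
      - (2 * (n : ℝ) - ((n : ℝ) + 2) * p) / (((n : ℝ) + 1) * (p - 1) * p)
      - ((n : ℝ) - 1) / (((n : ℝ) + 1) * p))
    (b : ℕ → ℝ) (h0 : b 0 = -1)
    (hrec : ∀ m, b (m + 1) = min ((n : ℝ) - 1 - k (b m)) a) :
    0 < μ
    ∧ (∀ m, b m ≤ (2 * (n : ℝ) - ((n : ℝ) + 2) * p) / (((n : ℝ) + 1) * (p - 1)) + a →
        μ ≤ b (m + 1) - b m)
    ∧ ∃ N : ℕ, ∀ m, N ≤ m → b m = a := by
  have hn1 : (3:ℝ) ≤ (n:ℝ) := by exact_mod_cast hn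
  have hn2 : (0:ℝ) < (n:ℝ) + 2 := by linarith
  have h2n : 2 * (n:ℝ) < p * ((n:ℝ) + 2) := by
    rwa [div_lt_iff₀ hn2] at hp
  have hp1 : 1 < p := by nlinarith
  have hp0 : 0 < p := by linarith
  have hpne : p ≠ 0 := ne_of_gt hp0
  have hp1ne : p - 1 ≠ 0 := by intro h; nlinarith
  have hn1ne : (n:ℝ) + 1 ≠ 0 := by positivity
  set T : ℝ := (2 * (n:ℝ) - ((n:ℝ) + 2) * p) / (((n:ℝ) + 1) * (p - 1)) + a with hT
  have key : ∀ x, (n:ℝ) - 1 - k x = a + (1 - 1/p) * (x - T) := by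
    intro x
    rw [hk, hT, ha]
    field_simp
    ring
  have keyμ : μ = a - T := by
    rw [hμ, hT, ha]
    field_simp
    ring
  have hμpos : 0 < μ := by
    have haT : a - T = (((n:ℝ) + 2) * p - 2 * (n:ℝ)) / (((n:ℝ) + 1) * (p - 1)) := by
      rw [hT]; field_simp; ring
    rw [keyμ, haT]
    apply div_pos (by nlinarith) (by nlinarith)
  have hc : 0 < 1 - 1/p := by
    have : 1/p < 1 := by rw [div_lt_one hp0]; exact hp1
    linarith
  have hstep : ∀ m, b m ≤ T → μ ≤ b (m + 1) - b m := by
    intro m hm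
    have h1p : (0:ℝ) < 1/p := by positivity
    have hfle : (n:ℝ) - 1 - k (b m) ≤ a := by
      rw [key]
      nlinarith [mul_nonneg hc.le (sub_nonneg.mpr hm)]
    rw [hrec, min_eq_left hfle, key, keyμ]
    nlinarith [mul_nonneg h1p.le (sub_nonneg.mpr hm)]
  have hTa : T < a := by rw [keyμ] at hμpos; linarith
  have hjump : ∀ m, T < b m → b (m + 1) = a := by
    intro m hm
    have : a ≤ (n:ℝ) - 1 - k (b m) := by
      rw [key]
      nlinarith [mul_nonneg hc.le (by linarith : (0:ℝ) ≤ b m - T)]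
    rw [hrec]
    exact min_eq_right this
  have hbig : ∃ m, T < b m := by
    by_contra h
    push_neg at h
    have hlow : ∀ m : ℕ, -1 + (m:ℝ) * μ ≤ b m := by
      intro m
      induction m with
      | zero =>
        rw [h0]
        norm_num
      | succ j ih =>
        have h1 := hstep j (h j)
        push_cast
        linarith
    obtain ⟨m, hm⟩ := exists_nat_gt ((T + 1) / μ)
    rw [div_lt_iff₀ hμpos] at hm
    have := hlow m
    have := h m
    linarith
  obtain ⟨M, hM⟩ := hbig
  refine ⟨hμpos, hstep, M + 1, ?_⟩
  intro m hm
  induction m, hm using Nat.le_induction with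
  | base => exact hjump M hM
  | succ m hm ih => exact hjump m (by rw [ih]; exact hTa)
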